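/- Every independent set in the circulant graph C(17, {1,4}) has at most 6 elements. -/
import Mathlib

private def S : Finset (ZMod 17) := {0,1,2,3,4}

private lemma triple_bad : ∀ a ∈ S, ∀ b ∈ S, ∀ c ∈ S, a ≠ b → a ≠ c → b ≠ c →
    (a-b = 1 ∨ a-b = -1 ∨ a-b = 4 ∨ a-b = -4) ∨
    (a-c = 1 ∨ a-c = -1 ∨ a-c = 4 ∨ a-c = -4) ∨
    (b-c = 1 ∨ b-c = -1 ∨ b-c = 4 ∨ b-c = -4) := by decide

theorem circulant_indep_le_six :
    ∀ I : Finset (ZMod 17),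
      (∀ i ∈ I, ∀ j ∈ I, i - j ≠ 1 ∧ i - j ≠ -1 ∧ i - j ≠ 4 ∧ i - j ≠ -4) →
      I.card ≤ 6 := by
  intro I h
  -- window count lemma
  have hwin : ∀ k : ZMod 17, (I.filter (fun i => i - k ∈ S)).card ≤ 2 := by
    intro k
    by_contra hlt
    push_neg at hlt
    obtain ⟨t, ht, htc⟩ := Finset.exists_subset_card_eq hlt
    obtain ⟨a, b, c, hab, hac, hbc, rfl⟩ := Finset.card_eq_three.mp htc
    have ha := ht (show a ∈ ({a,b,c} : Finset (ZMod 17)) by simp)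
    have hb := ht (show b ∈ ({a,b,c} : Finset (ZMod 17)) by simp)
    have hc := ht (show c ∈ ({a,b,c} : Finset (ZMod 17)) by simp)
    simp only [Finset.mem_filter] at ha hb hc
    have hab' : a - k ≠ b - k := fun e => hab (by
      have := congrArg (· + k) e; simpa using this)
    have hac' : a - k ≠ c - k := fun e => hac (by
      have := congrArg (· + k) e; simpa using this)
    have hbc' : b - k ≠ c - k := fun e => hbc (by
      have := congrArg (· + k) e; simpa using this)
    have := triple_bad (a-k) ha.2 (b-k) hb.2 (c-k) hc.2 hab' hac' hbc'
    have e1 : (a-k) - (b-k) = a - b := by ring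
    have e2 : (a-k) - (c-k) = a - c := by ring
    have e3 : (b-k) - (c-k) = b - c := by ring
    rw [e1, e2, e3] at this
    rcases this with h' | h' | h'
    · rcases h' with h' | h' | h' | h' <;> exact absurd h' (by obtain ⟨x,y,z,w⟩ := h a ha.1 b hb.1 <;> tauto)
    · rcases h' with h' | h' | h' | h' <;> exact absurd h' (by obtain ⟨x,y,z,w⟩ := h a ha.1 c hc.1 <;> tauto)
    · rcases h' with h' | h' | h' | h' <;> exact absurd h' (by obtain ⟨x,y,z,w⟩ := h b hb.1 c hc.1 <;> tauto)
  -- double counting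
  have hsum : ∑ k : ZMod 17, (I.filter (fun i => i - k ∈ S)).card = 5 * I.card := by
    have : ∀ k : ZMod 17, (I.filter (fun i => i - k ∈ S)).card
        = ∑ i ∈ I, if i - k ∈ S then 1 else 0 := fun k => Finset.card_filter _ _
    simp only [this]
    rw [Finset.sum_comm]
    have hfix : ∀ i : ZMod 17, ∑ k : ZMod 17, (if i - k ∈ S then 1 else 0) = 5 := by
      intro i
      have : ∑ k : ZMod 17, (if i - k ∈ S then 1 else 0)
          = (Finset.univ.filter (fun k : ZMod 17 => i - k ∈ S)).card := by
        rw [Finset.card_filter]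
      rw [this]
      have : (Finset.univ.filter (fun k : ZMod 17 => i - k ∈ S)).card = S.card := by
        apply Finset.card_bij (fun k _ => i - k)
        · intro k hk; simp only [Finset.mem_filter] at hk; exact hk.2
        · intro x hx y hy e
          have := congrArg (fun t => i - t) e
          simpa using this
        · intro s hs
          refine ⟨i - s, ?_, by ring⟩
          simp only [Finset.mem_filter, Finset.mem_univ, true_and]
          have : i - (i - s) = s := by ring
          rw [this]; exact hs
      rw [this]; decide
    simp only [hfix]
    simp [Finset.sum_const, mul_comm]
  have hbound : ∑ k : ZMod 17, (I.filter (fun i => i - k ∈ S)).card ≤ 17 * 2 := by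
    calc ∑ k : ZMod 17, (I.filter (fun i => i - k ∈ S)).card
        ≤ ∑ _k : ZMod 17, 2 := Finset.sum_le_sum (fun k _ => hwin k)
      _ = 17 * 2 := by simp [Finset.sum_const]
  rw [hsum] at hbound
  omega
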